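/- The number of linear collections of subsets of [n] is at most the number of scarce linear collections of subsets of [n] times 2^{2·∑_{k=0}^{⌊n/3⌋} C(n,k)}. -/

import Mathlib

open Finset

/-- A related triple: `{X, Y, X ∪ Y}` with `X, Y` disjoint and nonempty. -/
def IsRelatedTriple (n : ℕ) (T : Finset (Finset (Fin n))) : Prop :=
  ∃ X Y : Finset (Fin n), X ≠ ∅ ∧ Y ≠ ∅ ∧ Disjoint X Y ∧ T = {X, Y, X ∪ Y}

def IsLinearSetOfSubsets (n : ℕ) (B : Finset (Finset (Fin n))) : Prop :=
  ∀ T : Finset (Finset (Fin n)), IsRelatedTriple n T → (T ∩ B).card ≠ 2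

def IsScarceLinearSet (n : ℕ) (B : Finset (Finset (Fin n))) : Prop :=
  ∀ T : Finset (Finset (Fin n)), IsRelatedTriple n T → (T ∩ B).card ≤ 1

namespace StmtAux

variable {n : ℕ}

/-- The small sets: those of size at most `n/3`. -/
def Sfin (n : ℕ) : Finset (Finset (Fin n)) := univ.filter (fun A => A.card ≤ n / 3)

lemma mem_Sfin {A : Finset (Fin n)} : A ∈ Sfin n ↔ A.card ≤ n / 3 := by
  simp [Sfin]

lemma card_Sfin : (Sfin n).card = ∑ k ∈ Finset.range (n / 3 + 1), n.choose k := by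
  classical
  have h : Sfin n = (Finset.range (n / 3 + 1)).biUnion
      (fun k => Finset.powersetCard k (univ : Finset (Fin n))) := by
    ext A
    simp only [mem_Sfin, mem_biUnion, Finset.mem_range, Finset.mem_powersetCard]
    constructor
    · intro h; exact ⟨A.card, by omega, subset_univ _, rfl⟩
    · rintro ⟨k, hk, -, rfl⟩; omega
  rw [h, Finset.card_biUnion]
  · refine Finset.sum_congr rfl fun k _ => ?_
    rw [Finset.card_powersetCard, Finset.card_univ, Fintype.card_fin]
  · intro i _ j _ hij
    rw [Function.onFun, Finset.disjoint_left]
    intro A hA hA'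
    rw [Finset.mem_powersetCard] at hA hA'
    exact hij (hA.2 ▸ hA'.2 ▸ rfl)

section Triples

variable {X Y Z : Finset (Fin n)} {B : Finset (Finset (Fin n))}

lemma ne_of_disj (hX : X ≠ ∅) (hY : Y ≠ ∅) (hd : Disjoint X Y) : X ≠ Y := by
  rintro rfl
  exact hX (by simpa using disjoint_self.mp hd)

lemma ne_union_left (hY : Y ≠ ∅) (hd : Disjoint X Y) : X ≠ X ∪ Y := by
  intro h
  apply hY
  have hYX : Y ⊆ X := h ▸ Finset.subset_union_right
  exact Finset.subset_empty.mp (hd.symm.eq_bot_of_le hYX ▸ Finset.Subset.refl _)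

lemma ne_union_right (hX : X ≠ ∅) (hd : Disjoint X Y) : Y ≠ X ∪ Y := by
  intro h
  apply hX
  have hXY : X ⊆ Y := h ▸ Finset.subset_union_left
  exact Finset.subset_empty.mp (hd.eq_bot_of_le hXY ▸ Finset.Subset.refl _)

lemma triple_related (hX : X ≠ ∅) (hY : Y ≠ ∅) (hd : Disjoint X Y) :
    IsRelatedTriple n {X, Y, X ∪ Y} := ⟨X, Y, hX, hY, hd, rfl⟩

/-- In a linear set, two disjoint members force their union in. -/
lemma union_mem (hB : IsLinearSetOfSubsets n B) (hXB : X ∈ B) (hYB : Y ∈ B)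
    (hX : X ≠ ∅) (hY : Y ≠ ∅) (hd : Disjoint X Y) : X ∪ Y ∈ B := by
  by_contra hU
  apply hB {X, Y, X ∪ Y} (triple_related hX hY hd)
  have h2 : ({X, Y, X ∪ Y} : Finset (Finset (Fin n))) ∩ B = {X, Y} := by
    ext a
    simp only [Finset.mem_inter, Finset.mem_insert, Finset.mem_singleton]
    constructor
    · rintro ⟨(rfl | rfl | rfl), ha⟩
      · exact Or.inl rfl
      · exact Or.inr rfl
      · exact absurd ha hU
    · rintro (rfl | rfl)
      · exact ⟨Or.inl rfl, hXB⟩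
      · exact ⟨Or.inr (Or.inl rfl), hYB⟩
  rw [h2, Finset.card_pair (ne_of_disj hX hY hd)]

/-- In a linear set, a member and a strictly larger member force the difference in. -/
lemma sdiff_mem (hB : IsLinearSetOfSubsets n B) (hZB : Z ∈ B) (hXB : X ∈ B)
    (hX : X ≠ ∅) (hss : X ⊂ Z) : Z \ X ∈ B := by
  by_contra hY
  have hYne : Z \ X ≠ ∅ := by
    rw [← Finset.nonempty_iff_ne_empty, Finset.sdiff_nonempty]
    intro h
    exact hss.ne (Finset.Subset.antisymm hss.subset h)
  have hd : Disjoint X (Z \ X) := Finset.disjoint_sdiff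
  have hu : X ∪ (Z \ X) = Z := Finset.union_sdiff_of_subset hss.subset
  apply hB {X, Z \ X, X ∪ (Z \ X)} (triple_related hX hYne hd)
  have h2 : ({X, Z \ X, X ∪ (Z \ X)} : Finset (Finset (Fin n))) ∩ B = {X, Z} := by
    ext a
    simp only [Finset.mem_inter, Finset.mem_insert, Finset.mem_singleton]
    constructor
    · rintro ⟨(rfl | rfl | rfl), ha⟩
      · exact Or.inl rfl
      · exact absurd ha hY
      · exact Or.inr (by rw [hu])
    · rintro (rfl | rfl)
      · exact ⟨Or.inl rfl, hXB⟩
      · exact ⟨Or.inr (Or.inr (by rw [hu])), hZB⟩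
  rw [h2, Finset.card_pair hss.ne]

end Triples

section Structure

variable (B : Finset (Finset (Fin n)))

/-- Nonempty members. -/
def Wof : Finset (Finset (Fin n)) := B.erase ∅

/-- Minimal nonempty members. -/
def Mof : Finset (Finset (Fin n)) :=
  (Wof B).filter (fun A => ∀ A' ∈ Wof B, A' ⊆ A → A' = A)

variable {B}

lemma mem_Wof {Z : Finset (Fin n)} : Z ∈ Wof B ↔ Z ≠ ∅ ∧ Z ∈ B := Finset.mem_erase

lemma Mof_subset_Wof : Mof B ⊆ Wof B := Finset.filter_subset _ _

lemma mem_Mof {Z : Finset (Fin n)} :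
    Z ∈ Mof B ↔ Z ∈ Wof B ∧ ∀ A' ∈ Wof B, A' ⊆ Z → A' = Z := Finset.mem_filter

lemma Mof_ne_empty {Z : Finset (Fin n)} (h : Z ∈ Mof B) : Z ≠ ∅ :=
  (mem_Wof.mp (Mof_subset_Wof h)).1

/-- Every nonempty member contains a minimal member. -/
lemma exists_min_aux : ∀ k : ℕ, ∀ Z ∈ Wof B, Z.card ≤ k → ∃ m ∈ Mof B, m ⊆ Z := by
  intro k
  induction k with
  | zero =>
    intro Z hZ hc
    exfalso
    exact (mem_Wof.mp hZ).1 (Finset.card_eq_zero.mp (Nat.le_zero.mp hc))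
  | succ k ih =>
    intro Z hZ hc
    by_cases hmin : ∀ A' ∈ Wof B, A' ⊆ Z → A' = Z
    · exact ⟨Z, mem_Mof.mpr ⟨hZ, hmin⟩, Finset.Subset.refl _⟩
    · push_neg at hmin
      obtain ⟨A', hA', hA'sub, hA'ne⟩ := hmin
      have hcard : A'.card ≤ k := by
        have := Finset.card_lt_card (ssubset_of_subset_of_ne hA'sub hA'ne)
        omega
      obtain ⟨m, hm, hmsub⟩ := ih A' hA' hcard
      exact ⟨m, hm, hmsub.trans hA'sub⟩

lemma exists_min {Z : Finset (Fin n)} (hZ : Z ∈ Wof B) : ∃ m ∈ Mof B, m ⊆ Z :=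
  exists_min_aux Z.card Z hZ le_rfl

/-- Disjoint-union closure of a family. -/
inductive Gen (M : Finset (Finset (Fin n))) : Finset (Fin n) → Prop
  | base {A : Finset (Fin n)} (h : A ∈ M) : Gen M A
  | step {U V : Finset (Fin n)} (hU : Gen M U) (hV : Gen M V) (hd : Disjoint U V) :
      Gen M (U ∪ V)

lemma gen_mem_W (hB : IsLinearSetOfSubsets n B) {Z : Finset (Fin n)} (h : Gen (Mof B) Z) :
    Z ∈ Wof B := by
  induction h with
  | base h => exact Mof_subset_Wof h
  | step hU hV hd ihU ihV =>
    rw [mem_Wof] at ihU ihV ⊢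
    refine ⟨?_, union_mem hB ihU.2 ihV.2 ihU.1 ihV.1 hd⟩
    intro h
    exact ihU.1 (Finset.union_eq_empty.mp h).1

lemma mem_W_gen_aux (hB : IsLinearSetOfSubsets n B) :
    ∀ k : ℕ, ∀ Z ∈ Wof B, Z.card ≤ k → Gen (Mof B) Z := by
  intro k
  induction k with
  | zero =>
    intro Z hZ hc
    exact absurd (Finset.card_eq_zero.mp (Nat.le_zero.mp hc)) (mem_Wof.mp hZ).1
  | succ k ih =>
    intro Z hZ hc
    obtain ⟨m, hm, hmsub⟩ := exists_min hZ
    by_cases hmZ : m = Z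
    · exact hmZ ▸ Gen.base hm
    · have hss : m ⊂ Z := ssubset_of_subset_of_ne hmsub hmZ
      have hZm : Z \ m ∈ Wof B := by
        rw [mem_Wof]
        constructor
        · rw [← Finset.nonempty_iff_ne_empty, Finset.sdiff_nonempty]
          intro h
          exact hmZ (Finset.Subset.antisymm hmsub h)
        · exact sdiff_mem hB (mem_Wof.mp hZ).2 (mem_Wof.mp (Mof_subset_Wof hm)).2
            (Mof_ne_empty hm) hss
      have hcard : (Z \ m).card ≤ k := by
        have h1 : (Z \ m).card = Z.card - m.card := Finset.card_sdiff_of_subset hmsub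
        have h2 : 1 ≤ m.card := Finset.card_pos.mpr
          (Finset.nonempty_iff_ne_empty.mpr (Mof_ne_empty hm))
        have h3 : m.card ≤ Z.card := Finset.card_le_card hmsub
        omega
      have hgen : Gen (Mof B) (Z \ m) := ih _ hZm hcard
      have : Gen (Mof B) (m ∪ (Z \ m)) := Gen.step (Gen.base hm) hgen Finset.disjoint_sdiff
      rwa [Finset.union_sdiff_of_subset hmsub] at this

lemma mem_W_gen (hB : IsLinearSetOfSubsets n B) {Z : Finset (Fin n)} (hZ : Z ∈ Wof B) :
    Gen (Mof B) Z := mem_W_gen_aux hB Z.card Z hZ le_rfl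

end Structure

section Encoding

variable (B : Finset (Finset (Fin n)))

/-- Big minimal members. -/
def Mb : Finset (Finset (Fin n)) := (Mof B).filter (fun A => ¬ A.card ≤ n / 3)

/-- Small minimal members. -/
def Ms : Finset (Finset (Fin n)) := (Mof B).filter (fun A => A.card ≤ n / 3)

/-- Pairwise intersecting. -/
def PI (s : Finset (Finset (Fin n))) : Prop := ∀ A ∈ s, ∀ A' ∈ s, ¬ Disjoint A A'

lemma exists_sigma :
    ∃ σ, σ ⊆ Mb B ∧ PI σ ∧ ∀ t ⊆ Mb B, PI t → t.card ≤ σ.card := by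
  classical
  have hne : (((Mb B).powerset).filter (fun s => PI s)).Nonempty := by
    refine ⟨∅, ?_⟩
    rw [Finset.mem_filter, Finset.mem_powerset]; exact ⟨Finset.empty_subset _, by simp [PI]⟩
  obtain ⟨σ, hσ, hmax⟩ := Finset.exists_max_image _ (fun s => s.card) hne
  rw [Finset.mem_filter, Finset.mem_powerset] at hσ
  refine ⟨σ, hσ.1, hσ.2, fun t ht hPI => ?_⟩
  exact hmax t (by rw [Finset.mem_filter, Finset.mem_powerset]; exact ⟨ht, hPI⟩)

/-- A chosen maximum pairwise-intersecting subfamily of the big minimals. -/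
noncomputable def sigma : Finset (Finset (Fin n)) := (exists_sigma B).choose

lemma sigma_spec : sigma B ⊆ Mb B ∧ PI (sigma B) ∧
    ∀ t ⊆ Mb B, PI t → t.card ≤ (sigma B).card := (exists_sigma B).choose_spec

/-- Unions of disjoint pairs of big minimals. -/
noncomputable def Ufin : Finset (Finset (Fin n)) :=
  ((Mb B ×ˢ Mb B).filter (fun p => Disjoint p.1 p.2)).image (fun p => p.1 ∪ p.2)

noncomputable def d2 : Finset (Finset (Fin n)) := (Ufin B).image (fun A => Aᶜ)

noncomputable def d1 : Finset (Finset (Fin n)) :=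
  Ms B ∪ (if ∅ ∈ B then {∅} else ∅)

/-- The reconstruction map. -/
noncomputable def recon (σ e1 e2 : Finset (Finset (Fin n))) : Finset (Finset (Fin n)) :=
  let U : Finset (Finset (Fin n)) := e2.image (fun A => Aᶜ)
  let D : Finset (Finset (Fin n)) :=
    ((U ×ˢ σ).filter (fun p => p.2 ⊂ p.1)).image (fun p => p.1 \ p.2)
  let F : Finset (Finset (Fin n)) := σ ∪ D ∪ e1.erase ∅
  let M : Finset (Finset (Fin n)) := F.filter (fun A => ∀ A' ∈ F, A' ⊆ A → A' = A)
  (@Finset.filter _ (fun Z => Gen M Z) (Classical.decPred _) univ) ∪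
    (if ∅ ∈ e1 then {∅} else ∅)

end Encoding

section Recon

variable {B : Finset (Finset (Fin n))}

lemma Mb_nonempty_mem {A : Finset (Fin n)} (h : A ∈ Mb B) : A ≠ ∅ :=
  Mof_ne_empty (Finset.mem_filter.mp h).1

lemma d1_erase : (d1 B).erase ∅ = Ms B := by
  have hMs : ∅ ∉ Ms B := fun h => Mof_ne_empty (Finset.mem_filter.mp h).1 rfl
  ext A
  rw [d1]
  by_cases hA : A = ∅
  · subst hA
    simp [hMs]
  · simp only [Finset.mem_erase, Finset.mem_union]
    constructor
    · rintro ⟨-, h | h⟩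
      · exact h
      · exfalso; split at h <;> simp_all
    · intro h; exact ⟨hA, Or.inl h⟩

lemma empty_mem_d1_iff : ∅ ∈ d1 B ↔ ∅ ∈ B := by
  have hMs : ∅ ∉ Ms B := fun h => Mof_ne_empty (Finset.mem_filter.mp h).1 rfl
  rw [d1]
  simp only [Finset.mem_union, hMs, false_or]
  split <;> simp_all

lemma d2_image_compl : (d2 B).image (fun A => Aᶜ) = Ufin B := by
  rw [d2, Finset.image_image]
  have : ((fun A : Finset (Fin n) => Aᶜ) ∘ fun A => Aᶜ) = id := by
    funext A; simp
  rw [this, Finset.image_id]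

lemma Ufin_mem_W (hB : IsLinearSetOfSubsets n B) {Z : Finset (Fin n)} (hZ : Z ∈ Ufin B) :
    Z ∈ Wof B := by
  rw [Ufin] at hZ
  obtain ⟨p, hp, rfl⟩ := Finset.mem_image.mp hZ
  rw [Finset.mem_filter, Finset.mem_product] at hp
  obtain ⟨⟨h1, h2⟩, hd⟩ := hp
  have w1 := mem_Wof.mp (Mof_subset_Wof (Finset.mem_filter.mp h1).1)
  have w2 := mem_Wof.mp (Mof_subset_Wof (Finset.mem_filter.mp h2).1)
  rw [mem_Wof]
  refine ⟨?_, union_mem hB w1.2 w2.2 w1.1 w2.1 hd⟩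
  intro h
  exact w1.1 (Finset.union_eq_empty.mp h).1

/-- Main reconstruction lemma. -/
lemma recon_eq (hB : IsLinearSetOfSubsets n B) : recon (sigma B) (d1 B) (d2 B) = B := by
  classical
  obtain ⟨hσsub, hσPI, hσmax⟩ := sigma_spec B
  rw [recon]
  simp only [d2_image_compl, d1_erase]
  set D : Finset (Finset (Fin n)) :=
    ((Ufin B ×ˢ sigma B).filter (fun p => p.2 ⊂ p.1)).image (fun p => p.1 \ p.2) with hD
  set F : Finset (Finset (Fin n)) := sigma B ∪ D ∪ Ms B with hF
  -- F ⊆ Wof B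
  have hFW : F ⊆ Wof B := by
    intro A hA
    rw [hF, Finset.mem_union, Finset.mem_union] at hA
    rcases hA with (hA | hA) | hA
    · exact Mof_subset_Wof (Finset.mem_filter.mp (hσsub hA)).1
    · rw [hD, Finset.mem_image] at hA
      obtain ⟨p, hp, rfl⟩ := hA
      rw [Finset.mem_filter, Finset.mem_product] at hp
      obtain ⟨⟨hZ, hX⟩, hss⟩ := hp
      have hZW := Ufin_mem_W hB hZ
      have hXW := mem_Wof.mp (Mof_subset_Wof (Finset.mem_filter.mp (hσsub hX)).1)
      rw [mem_Wof]
      constructor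
      · rw [← Finset.nonempty_iff_ne_empty, Finset.sdiff_nonempty]
        intro h
        exact hss.ne (Finset.Subset.antisymm h hss.subset).symm
      · exact sdiff_mem hB (mem_Wof.mp hZW).2 hXW.2 hXW.1 hss
    · exact Mof_subset_Wof (Finset.mem_filter.mp hA).1
  -- Mof B ⊆ F
  have hMF : Mof B ⊆ F := by
    intro A hA
    rw [hF, Finset.mem_union, Finset.mem_union]
    by_cases hsmall : A.card ≤ n / 3
    · exact Or.inr (Finset.mem_filter.mpr ⟨hA, hsmall⟩)
    have hAb : A ∈ Mb B := Finset.mem_filter.mpr ⟨hA, hsmall⟩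
    by_cases hσA : A ∈ sigma B
    · exact Or.inl (Or.inl hσA)
    · -- find a disjoint partner in sigma
      have hins : insert A (sigma B) ⊆ Mb B := by
        intro x hx
        rcases Finset.mem_insert.mp hx with rfl | hx
        · exact hAb
        · exact hσsub hx
      have hcard : (insert A (sigma B)).card = (sigma B).card + 1 :=
        Finset.card_insert_of_notMem hσA
      have hnPI : ¬ PI (insert A (sigma B)) := by
        intro hPI
        have := hσmax _ hins hPI
        omega
      rw [PI] at hnPI
      push_neg at hnPI
      obtain ⟨x, hx, y, hy, hdxy⟩ := hnPI
      have hAne : A ≠ ∅ := Mof_ne_empty hA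
      have key : ∃ X ∈ sigma B, Disjoint X A := by
        rcases Finset.mem_insert.mp hx with hxA | hxs
        · rcases Finset.mem_insert.mp hy with hyA | hys
          · rw [hxA, hyA] at hdxy
            exact absurd (by simpa using disjoint_self.mp hdxy) hAne
          · rw [hxA] at hdxy
            exact ⟨y, hys, hdxy.symm⟩
        · rcases Finset.mem_insert.mp hy with hyA | hys
          · rw [hyA] at hdxy
            exact ⟨x, hxs, hdxy⟩
          · exact absurd hdxy (hσPI x hxs y hys)
      obtain ⟨X, hXσ, hdXA⟩ := key
      have hXb : X ∈ Mb B := hσsub hXσ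
      have hXne : X ≠ ∅ := Mb_nonempty_mem hXb
      have hZU : X ∪ A ∈ Ufin B := by
        rw [Ufin, Finset.mem_image]
        exact ⟨(X, A), by
          rw [Finset.mem_filter, Finset.mem_product]
          exact ⟨⟨hXb, hAb⟩, hdXA⟩, rfl⟩
      refine Or.inl (Or.inr ?_)
      rw [hD, Finset.mem_image]
      refine ⟨(X ∪ A, X), ?_, Finset.union_sdiff_cancel_left hdXA⟩
      rw [Finset.mem_filter, Finset.mem_product]
      refine ⟨⟨hZU, hXσ⟩, ?_⟩
      exact ssubset_of_subset_of_ne Finset.subset_union_left (ne_union_left hAne hdXA)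
  -- minimals of F equal Mof B
  have hMin : F.filter (fun A => ∀ A' ∈ F, A' ⊆ A → A' = A) = Mof B := by
    ext A
    rw [Finset.mem_filter, mem_Mof]
    constructor
    · rintro ⟨hAF, hmin⟩
      obtain ⟨m, hm, hmsub⟩ := exists_min (hFW hAF)
      have := hmin m (hMF hm) hmsub
      subst this
      exact mem_Mof.mp hm
    · rintro ⟨hAW, hmin⟩
      exact ⟨hMF (mem_Mof.mpr ⟨hAW, hmin⟩), fun A' hA' hsub => hmin A' (hFW hA') hsub⟩
  rw [hMin]
  -- the filtered Gen set equals Wof B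
  have hWeq : (@Finset.filter _ (fun Z => Gen (Mof B) Z) (Classical.decPred _) univ)
      = Wof B := by
    ext Z
    rw [Finset.mem_filter]
    constructor
    · rintro ⟨-, h⟩; exact gen_mem_W hB h
    · intro h; exact ⟨Finset.mem_univ _, mem_W_gen hB h⟩
  rw [hWeq]
  -- final assembly
  ext A
  by_cases hA : A = ∅
  · subst hA
    simp only [Finset.mem_union, mem_Wof, ne_eq, not_true_eq_false, false_and, false_or]
    by_cases hBe : ∅ ∈ B
    · simp [empty_mem_d1_iff.mpr hBe, hBe]
    · have hnd : ∅ ∉ d1 B := fun h => hBe (empty_mem_d1_iff.mp h)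
      simp [hnd, hBe]
  · simp only [Finset.mem_union, mem_Wof]
    have : A ∉ (if ∅ ∈ d1 B then ({∅} : Finset (Finset (Fin n))) else ∅) := by
      split <;> simp_all
    constructor
    · rintro (⟨-, h⟩ | h)
      · exact h
      · exact absurd h this
    · intro h; exact Or.inl ⟨hA, h⟩

end Recon

section ScarceAndSmall

variable {B : Finset (Finset (Fin n))}

lemma sigma_scarce (B : Finset (Finset (Fin n))) : IsScarceLinearSet n (sigma B) := by
  classical
  obtain ⟨hσsub, hσPI, -⟩ := sigma_spec B
  intro T hT
  obtain ⟨X, Y, hX, hY, hd, rfl⟩ := hT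
  by_contra hcard
  push_neg at hcard
  obtain ⟨a, ha, b, hb, hab⟩ := Finset.one_lt_card.mp hcard
  rw [Finset.mem_inter] at ha hb
  obtain ⟨haT, haσ⟩ := ha
  obtain ⟨hbT, hbσ⟩ := hb
  -- facts about sigma
  have antichain : ∀ A ∈ sigma B, ∀ A' ∈ sigma B, A ⊆ A' → A = A' := by
    intro A hA A' hA' hsub
    have hA'M := (Finset.mem_filter.mp (hσsub hA')).1
    have hAW : A ∈ Wof B := Mof_subset_Wof (Finset.mem_filter.mp (hσsub hA)).1
    exact (mem_Mof.mp hA'M).2 A hAW hsub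
  have noDisj : ∀ A ∈ sigma B, ∀ A' ∈ sigma B, ¬ Disjoint A A' := hσPI
  have sub_union_left : (X : Finset (Fin n)) ⊆ X ∪ Y := Finset.subset_union_left
  have sub_union_right : (Y : Finset (Fin n)) ⊆ X ∪ Y := Finset.subset_union_right
  simp only [Finset.mem_insert, Finset.mem_singleton] at haT hbT
  rcases haT with h1 | h1 | h1 <;> rcases hbT with h2 | h2 | h2
  · exact hab (h1.trans h2.symm)
  · exact noDisj a haσ b hbσ (by rw [h1, h2]; exact hd)
  · exact hab (antichain a haσ b hbσ (by rw [h1, h2]; exact sub_union_left))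
  · exact noDisj a haσ b hbσ (by rw [h1, h2]; exact hd.symm)
  · exact hab (h1.trans h2.symm)
  · exact hab (antichain a haσ b hbσ (by rw [h1, h2]; exact sub_union_right))
  · exact hab (antichain b hbσ a haσ (by rw [h1, h2]; exact sub_union_left)).symm
  · exact hab (antichain b hbσ a haσ (by rw [h1, h2]; exact sub_union_right)).symm
  · exact hab (h1.trans h2.symm)

lemma d1_subset_S (B : Finset (Finset (Fin n))) : d1 B ⊆ Sfin n := by
  intro A hA
  rw [d1, Finset.mem_union] at hA
  rw [mem_Sfin]
  rcases hA with hA | hA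
  · exact (Finset.mem_filter.mp hA).2
  · split at hA
    · rw [Finset.mem_singleton] at hA
      subst hA
      simp
    · simp at hA

lemma d2_subset_S (B : Finset (Finset (Fin n))) : d2 B ⊆ Sfin n := by
  intro c hc
  rw [d2, Finset.mem_image] at hc
  obtain ⟨Z, hZ, rfl⟩ := hc
  rw [Ufin, Finset.mem_image] at hZ
  obtain ⟨p, hp, rfl⟩ := hZ
  rw [Finset.mem_filter, Finset.mem_product] at hp
  obtain ⟨⟨h1, h2⟩, hd⟩ := hp
  have hb1 : ¬ p.1.card ≤ n / 3 := (Finset.mem_filter.mp h1).2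
  have hb2 : ¬ p.2.card ≤ n / 3 := (Finset.mem_filter.mp h2).2
  have hcu : (p.1 ∪ p.2).card = p.1.card + p.2.card := Finset.card_union_of_disjoint hd
  have hcc : (p.1 ∪ p.2)ᶜ.card = Fintype.card (Fin n) - (p.1 ∪ p.2).card :=
    Finset.card_compl _
  have hle : (p.1 ∪ p.2).card ≤ n := by
    have := Finset.card_le_univ (p.1 ∪ p.2)
    simpa using this
  rw [mem_Sfin, hcc, Fintype.card_fin]
  omega

end ScarceAndSmall

end StmtAux

open StmtAux in
theorem stmt_10 (n : ℕ) :
    Nat.card {B : Finset (Finset (Fin n)) // IsLinearSetOfSubsets n B} ≤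
      Nat.card {B : Finset (Finset (Fin n)) // IsScarceLinearSet n B} *
        2 ^ (2 * ∑ k ∈ Finset.range (n / 3 + 1), n.choose k) := by
  classical
  set m : ℕ := ∑ k ∈ Finset.range (n / 3 + 1), n.choose k with hm
  let f : {B : Finset (Finset (Fin n)) // IsLinearSetOfSubsets n B} →
      {B : Finset (Finset (Fin n)) // IsScarceLinearSet n B} ×
        ((Sfin n).powerset : Finset (Finset (Finset (Fin n)))) ×
        ((Sfin n).powerset : Finset (Finset (Finset (Fin n)))) :=
    fun B => (⟨sigma B.1, sigma_scarce B.1⟩,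
      ⟨d1 B.1, Finset.mem_powerset.mpr (d1_subset_S B.1)⟩,
      ⟨d2 B.1, Finset.mem_powerset.mpr (d2_subset_S B.1)⟩)
  have hf : Function.Injective f := by
    rintro ⟨B, hB⟩ ⟨B', hB'⟩ h
    simp only [f, Prod.mk.injEq, Subtype.mk.injEq] at h
    obtain ⟨h1, h2, h3⟩ := h
    have e : B = B' := by
      rw [← recon_eq hB, ← recon_eq hB', h1, h2, h3]
    exact Subtype.ext e
  have hcard := Nat.card_le_card_of_injective f hf
  rw [Nat.card_prod, Nat.card_prod, Nat.card_eq_finsetCard, Finset.card_powerset,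
    card_Sfin] at hcard
  calc Nat.card {B : Finset (Finset (Fin n)) // IsLinearSetOfSubsets n B}
      ≤ Nat.card {B : Finset (Finset (Fin n)) // IsScarceLinearSet n B} * (2 ^ m * 2 ^ m) :=
        hcard
    _ = Nat.card {B : Finset (Finset (Fin n)) // IsScarceLinearSet n B} * 2 ^ (2 * m) := by
        rw [← pow_add, two_mul]
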